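/- Let G be a finite group, p a prime, H a subgroup of G, and x ∈ H a p-element. Then λ_G(x)/n_p(G) ≤ λ_H(x)/n_p(H), i.e., λ_G(x) · n_p(H) ≤ λ_H(x) · n_p(G). Moreover, if H is normal in G, then equality holds: λ_G(x) · n_p(H) = λ_H(x) · n_p(G). -/

import Mathlib

open Subgroup

section Helpers

lemma nat_card_sigma' {ι : Type*} [Fintype ι] (f : ι → Type*) [∀ i, Finite (f i)] :
    Nat.card (Σ i, f i) = ∑ i, Nat.card (f i) := by
  letI : ∀ i, Fintype (f i) := fun i => Fintype.ofFinite _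
  simp [Nat.card_eq_fintype_card]

lemma mem_sylow_smul_iff {p : ℕ} {G : Type*} [Group G] {g x : G} {P : Sylow p G} :
    x ∈ (g • P : Sylow p G) ↔ g⁻¹ * x * g ∈ (P : Subgroup G) := by
  change x ∈ ((g • P : Sylow p G) : Subgroup G) ↔ _
  rw [Sylow.coe_subgroup_smul, Subgroup.mem_pointwise_smul_iff_inv_smul_mem]
  simp [MulAut.smul_def]

lemma card_mul_relIndex' {G : Type*} [Group G] {A B : Subgroup G} (h : A ≤ B) :
    Nat.card A * A.relIndex B = Nat.card B := by
  have h1 := Subgroup.card_mul_index (A.subgroupOf B)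
  rwa [Nat.card_congr (Subgroup.subgroupOfEquivOfLe h).toEquiv] at h1

end Helpers

/-- `λ_G(x)`: the number of Sylow `p`-subgroups of `G` containing `x`. -/
noncomputable def sylCount (p : ℕ) {G : Type*} [Group G] (x : G) : ℕ :=
  Nat.card {Q : Sylow p G // x ∈ Q}

lemma countA {p : ℕ} {G : Type*} [Group G] [Fintype G] [Fact p.Prime]
    (P : Sylow p G) (x : G) :
    Nat.card {g : G // g * x * g⁻¹ ∈ (P : Subgroup G)} * Nat.card (Sylow p G)
      = sylCount p x * Nat.card G := by
  classical
  have hmem : ∀ g : G, (g * x * g⁻¹ ∈ (P : Subgroup G)) ↔ x ∈ ((g⁻¹ • P : Sylow p G)) := by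
    intro g; rw [mem_sylow_smul_iff]; simp
  letI : Fintype (Sylow p G) := Fintype.ofFinite _
  letI : Fintype {Q : Sylow p G // x ∈ Q} := Fintype.ofFinite _
  have e : (Σ Q : {Q : Sylow p G // x ∈ Q}, {g : G // g⁻¹ • P = Q.1}) ≃
      {g : G // g * x * g⁻¹ ∈ (P : Subgroup G)} := by
    refine Equiv.ofBijective
      (fun s => ⟨s.2.1, (hmem s.2.1).mpr (by rw [s.2.2]; exact s.1.2)⟩) ⟨?_, ?_⟩
    · rintro ⟨⟨Q, hQ⟩, g, hg⟩ ⟨⟨Q', hQ'⟩, g', hg'⟩ h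
      simp only [Subtype.mk.injEq] at h
      subst h
      have hQQ : Q = Q' := hg.symm.trans hg'
      subst hQQ
      rfl
    · rintro ⟨g, hg⟩
      exact ⟨⟨⟨g⁻¹ • P, (hmem g).mp hg⟩, ⟨g, rfl⟩⟩, rfl⟩
  have hfib : ∀ Q : {Q : Sylow p G // x ∈ Q},
      Nat.card {g : G // g⁻¹ • P = Q.1} = Nat.card (MulAction.stabilizer G P) := by
    intro Q
    obtain ⟨t, ht⟩ := MulAction.exists_smul_eq G P Q.1
    refine Nat.card_congr
      ⟨fun g => ⟨t⁻¹ * g.1⁻¹, ?_⟩, fun s => ⟨(t * s.1)⁻¹, ?_⟩, ?_, ?_⟩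
    · have := g.2
      rw [MulAction.mem_stabilizer_iff, mul_smul, this, ← ht, inv_smul_smul]
    · show ((t * s.1)⁻¹)⁻¹ • P = Q.1
      rw [inv_inv, mul_smul, s.2, ht]
    · intro g; apply Subtype.ext; simp
    · intro s; apply Subtype.ext; simp
  rw [← Nat.card_congr e, nat_card_sigma']
  simp_rw [hfib]
  rw [Finset.sum_const, smul_eq_mul]
  have hstab : Nat.card (MulAction.stabilizer G P) * Nat.card (Sylow p G) = Nat.card G := by
    rw [← MulAction.index_stabilizer_of_transitive G P]
    exact Subgroup.card_mul_index _
  rw [Finset.card_univ, mul_assoc, hstab,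
    show Fintype.card {Q : Sylow p G // x ∈ Q} = sylCount p x from
      (Nat.card_eq_fintype_card).symm]

lemma sylow_subgroupOf_normal {G : Type*} [Group G] [Fintype G] {p : ℕ} [Fact p.Prime]
    (H : Subgroup G) [H.Normal] (R : Sylow p G) :
    ∃ Q : Sylow p H, (Q : Subgroup H) = (R : Subgroup G).subgroupOf H := by
  set Mt := (R : Subgroup G) with hMt
  have hK : IsPGroup p (Mt.subgroupOf H) := R.2.comap_subtype
  obtain ⟨Q, hQ⟩ := hK.exists_le_sylow
  refine ⟨Q, le_antisymm ?_ hQ⟩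
  have hpos : ∀ A : Subgroup G, 0 < Nat.card A := fun A => Nat.card_pos
  have f1 : Nat.card (Mt ⊓ H : Subgroup G) * Mt.relIndex H = Nat.card H := by
    rw [← Subgroup.inf_relIndex_right (H := Mt) (K := H)]
    exact card_mul_relIndex' inf_le_right
  have f2 : Nat.card Mt * Mt.relIndex (Mt ⊔ H) = Nat.card (Mt ⊔ H : Subgroup G) :=
    card_mul_relIndex' le_sup_left
  have f3 : Nat.card H * H.relIndex (Mt ⊔ H) = Nat.card (Mt ⊔ H : Subgroup G) :=
    card_mul_relIndex' le_sup_right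
  have f4 : H.relIndex (Mt ⊔ H) = H.relIndex Mt := Subgroup.relIndex_sup_right Mt H
  have f5 : Nat.card (Mt ⊓ H : Subgroup G) * H.relIndex Mt = Nat.card Mt := by
    rw [← Subgroup.inf_relIndex_right (H := H) (K := Mt), inf_comm]
    exact card_mul_relIndex' inf_le_right
  have hr : 0 < H.relIndex Mt := by
    rcases Nat.eq_zero_or_pos (H.relIndex Mt) with h0 | h0
    · rw [h0, mul_zero] at f5; exact absurd f5.symm (hpos Mt).ne'
    · exact h0
  have h2 : Mt.relIndex H = Mt.relIndex (Mt ⊔ H) := by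
    have key : Nat.card (Mt ⊓ H : Subgroup G) * H.relIndex Mt * Mt.relIndex (Mt ⊔ H)
        = Nat.card (Mt ⊓ H : Subgroup G) * H.relIndex Mt * Mt.relIndex H := by
      rw [f5, f2, ← f3, f4, ← f1, ← f5]
      ring
    have hpos2 : 0 < Nat.card (Mt ⊓ H : Subgroup G) * H.relIndex Mt :=
      Nat.mul_pos (hpos _) hr
    exact (Nat.eq_of_mul_eq_mul_left hpos2 key).symm
  have hMtind : ¬ p ∣ Mt.index := R.not_dvd_index
  have hpK : ¬ p ∣ (Mt.subgroupOf H).index := by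
    have hdef : (Mt.subgroupOf H).index = Mt.relIndex H := rfl
    rw [hdef, h2]
    exact fun hd => hMtind (hd.trans (Subgroup.relIndex_dvd_index_of_le le_sup_left))
  set K := Mt.subgroupOf H
  have h3 : (K.subgroupOf (Q : Subgroup H)).index ∣ K.index :=
    Subgroup.relIndex_dvd_index_of_le hQ
  have h4 : (K.subgroupOf (Q : Subgroup H)).index ∣ Nat.card (Q : Subgroup H) :=
    Subgroup.index_dvd_card _
  obtain ⟨n, hn⟩ := IsPGroup.iff_card.mp Q.2
  rw [hn] at h4
  obtain ⟨k, hk, hdk⟩ := (Nat.dvd_prime_pow Fact.out).mp h4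
  have hk0 : k = 0 := by
    by_contra hk0
    exact hpK (dvd_trans (hdk ▸ dvd_pow_self p hk0) h3)
  rw [hk0, pow_zero] at hdk
  exact Subgroup.subgroupOf_eq_top.mp (Subgroup.index_eq_one.mp hdk)

lemma per_coset {G : Type*} [Group G] [Fintype G] {p : ℕ} [Fact p.Prime]
    (H : Subgroup G) (x : G) (hx : x ∈ H) (P : Sylow p G) (t : G) :
    Nat.card {h : H // (t * h) * x * (t * h)⁻¹ ∈ (P : Subgroup G)} * Nat.card (Sylow p H)
      ≤ Nat.card {Q : Sylow p H // (⟨x, hx⟩ : H) ∈ Q} * Nat.card H ∧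
    (H.Normal →
      Nat.card {h : H // (t * h) * x * (t * h)⁻¹ ∈ (P : Subgroup G)} * Nat.card (Sylow p H)
        = Nat.card {Q : Sylow p H // (⟨x, hx⟩ : H) ∈ Q} * Nat.card H) := by
  classical
  letI : Fintype H := Fintype.ofFinite _
  set x' : H := ⟨x, hx⟩ with hx'
  set Mt : Subgroup G := ((t⁻¹ • P : Sylow p G) : Subgroup G) with hMtdef
  have hcond : ∀ h : H, ((t * h) * x * (t * h)⁻¹ ∈ (P : Subgroup G)) ↔
      (h * x' * h⁻¹ ∈ Mt.subgroupOf H) := by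
    intro h
    rw [Subgroup.mem_subgroupOf]
    have hc : ((h * x' * h⁻¹ : H) : G) = (h : G) * x * (h : G)⁻¹ := rfl
    rw [hc, show (t * (h : G)) * x * (t * (h : G))⁻¹
        = t * ((h : G) * x * (h : G)⁻¹) * t⁻¹ from by group]
    have hm := mem_sylow_smul_iff (g := t⁻¹) (x := (h : G) * x * (h : G)⁻¹) (P := P)
    rw [inv_inv] at hm
    exact hm.symm
  have hcard : Nat.card {h : H // (t * h) * x * (t * h)⁻¹ ∈ (P : Subgroup G)}
      = Nat.card {h : H // h * x' * h⁻¹ ∈ Mt.subgroupOf H} :=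
    Nat.card_congr (Equiv.subtypeEquivRight hcond)
  have hsylx : Nat.card {Q : Sylow p H // x' ∈ Q} = sylCount p x' := rfl
  constructor
  · obtain ⟨Qb, hQb⟩ :=
      (IsPGroup.comap_subtype (t⁻¹ • P : Sylow p G).2 :
        IsPGroup p (Mt.subgroupOf H)).exists_le_sylow
    have hmono : Nat.card {h : H // h * x' * h⁻¹ ∈ Mt.subgroupOf H}
        ≤ Nat.card {h : H // h * x' * h⁻¹ ∈ (Qb : Subgroup H)} :=
      Nat.card_le_card_of_injective
        (Subtype.impEmbedding _ _ (fun h hh => hQb hh))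
        (Subtype.impEmbedding _ _ _).injective
    have hcnt := countA (G := H) Qb x'
    rw [hcard]
    calc Nat.card {h : H // h * x' * h⁻¹ ∈ Mt.subgroupOf H} * Nat.card (Sylow p H)
        ≤ Nat.card {h : H // h * x' * h⁻¹ ∈ (Qb : Subgroup H)} * Nat.card (Sylow p H) :=
          Nat.mul_le_mul_right _ hmono
      _ = sylCount p x' * Nat.card H := hcnt
      _ = Nat.card {Q : Sylow p H // x' ∈ Q} * Nat.card H := by rw [hsylx]
  · intro hN
    haveI := hN
    obtain ⟨Qn, hQn⟩ := sylow_subgroupOf_normal H (t⁻¹ • P : Sylow p G)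
    have hc2 : Nat.card {h : H // h * x' * h⁻¹ ∈ Mt.subgroupOf H}
        = Nat.card {h : H // h * x' * h⁻¹ ∈ (Qn : Subgroup H)} := by rw [hQn]
    rw [hcard, hc2, countA (G := H) Qn x', hsylx]

/-- Lemma: for a subgroup `H ≤ G` and a `p`-element `x ∈ H`,
`λ_G(x)/n_p(G) ≤ λ_H(x)/n_p(H)`, i.e. `λ_G(x) · n_p(H) ≤ λ_H(x) · n_p(G)`;
and if `H` is normal in `G` then equality holds. -/
theorem lambda_ratio_le_of_subgroup {G : Type*} [Group G] [Fintype G]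
    (p : ℕ) (hp : p.Prime) (H : Subgroup G) (x : G) (hx : x ∈ H)
    (hxp : ∃ n : ℕ, orderOf x = p ^ n) :
    sylCount p x * Nat.card (Sylow p H) ≤
      Nat.card {Q : Sylow p H // (⟨x, hx⟩ : H) ∈ Q} * Nat.card (Sylow p G) ∧
      (H.Normal →
        sylCount p x * Nat.card (Sylow p H) =
          Nat.card {Q : Sylow p H // (⟨x, hx⟩ : H) ∈ Q} * Nat.card (Sylow p G)) := by
  classical
  haveI hpf : Fact p.Prime := ⟨hp⟩
  obtain ⟨P⟩ : Nonempty (Sylow p G) := inferInstance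
  letI : Fintype (G ⧸ H) := Fintype.ofFinite _
  have hdecomp : Nat.card {g : G // g * x * g⁻¹ ∈ (P : Subgroup G)}
      = ∑ c : G ⧸ H, Nat.card
          {h : H // (c.out * h) * x * (c.out * h)⁻¹ ∈ (P : Subgroup G)} := by
    rw [← nat_card_sigma']
    refine (Nat.card_congr (Equiv.ofBijective
      (fun s : Σ c : G ⧸ H,
          {h : H // (c.out * h) * x * (c.out * h)⁻¹ ∈ (P : Subgroup G)} =>
        (⟨s.1.out * s.2.1, s.2.2⟩ :
          {g : G // g * x * g⁻¹ ∈ (P : Subgroup G)})) ⟨?_, ?_⟩)).symm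
    · rintro ⟨c, h, hh⟩ ⟨c', h', hh'⟩ heq
      simp only [Subtype.mk.injEq] at heq
      have hc : c = c' := by
        have e1 : (QuotientGroup.mk (c.out * (h : G)) : G ⧸ H) = c := by
          rw [QuotientGroup.mk_mul_of_mem _ h.2, QuotientGroup.out_eq']
        have e2 : (QuotientGroup.mk (c'.out * (h' : G)) : G ⧸ H) = c' := by
          rw [QuotientGroup.mk_mul_of_mem _ h'.2, QuotientGroup.out_eq']
        rw [← e1, ← e2, heq]
      subst hc
      have hhh : h = h' := Subtype.ext (mul_left_cancel heq)
      subst hhh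
      rfl
    · rintro ⟨g, hg⟩
      have hmem : ((QuotientGroup.mk g : G ⧸ H)).out⁻¹ * g ∈ H :=
        QuotientGroup.eq.mp (QuotientGroup.out_eq' (QuotientGroup.mk g : G ⧸ H))
      refine ⟨⟨QuotientGroup.mk g, ⟨⟨((QuotientGroup.mk g : G ⧸ H)).out⁻¹ * g, hmem⟩, ?_⟩⟩, ?_⟩
      · simpa [mul_inv_cancel_left] using hg
      · apply Subtype.ext
        simp [mul_inv_cancel_left]
  have hG : Nat.card G = Nat.card (G ⧸ H) * Nat.card H :=
    Subgroup.card_eq_card_quotient_mul_card_subgroup H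
  set A := Nat.card {g : G // g * x * g⁻¹ ∈ (P : Subgroup G)} with hA
  set nG := Nat.card (Sylow p G) with hnG
  set nH := Nat.card (Sylow p H) with hnH
  set lH := Nat.card {Q : Sylow p H // (⟨x, hx⟩ : H) ∈ Q} with hlH
  have hEG : A * nG = sylCount p x * Nat.card G := countA P x
  have hGpos : 0 < Nat.card G := Nat.card_pos
  have hle : A * nH ≤ lH * Nat.card G := by
    rw [hdecomp, Finset.sum_mul]
    calc ∑ c : G ⧸ H, Nat.card
            {h : H // (c.out * h) * x * (c.out * h)⁻¹ ∈ (P : Subgroup G)} * nH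
        ≤ ∑ _c : G ⧸ H, lH * Nat.card H :=
          Finset.sum_le_sum (fun c _ => (per_coset H x hx P c.out).1)
      _ = Nat.card (G ⧸ H) * (lH * Nat.card H) := by
          rw [Finset.sum_const, Finset.card_univ, smul_eq_mul]; simp [Nat.card_eq_fintype_card]
      _ = lH * Nat.card G := by rw [hG]; ring
  constructor
  · refine Nat.le_of_mul_le_mul_right ?_ hGpos
    calc sylCount p x * nH * Nat.card G = A * nG * nH := by rw [hEG]; ring
      _ = A * nH * nG := by ring
      _ ≤ lH * Nat.card G * nG := Nat.mul_le_mul_right _ hle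
      _ = lH * nG * Nat.card G := by ring
  · intro hN
    have heqs : A * nH = lH * Nat.card G := by
      rw [hdecomp, Finset.sum_mul]
      calc ∑ c : G ⧸ H, Nat.card
              {h : H // (c.out * h) * x * (c.out * h)⁻¹ ∈ (P : Subgroup G)} * nH
          = ∑ _c : G ⧸ H, lH * Nat.card H :=
            Finset.sum_congr rfl (fun c _ => (per_coset H x hx P c.out).2 hN)
        _ = Nat.card (G ⧸ H) * (lH * Nat.card H) := by
            rw [Finset.sum_const, Finset.card_univ, smul_eq_mul]; simp [Nat.card_eq_fintype_card]
        _ = lH * Nat.card G := by rw [hG]; ring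
    refine Nat.eq_of_mul_eq_mul_right hGpos ?_
    calc sylCount p x * nH * Nat.card G = A * nG * nH := by rw [hEG]; ring
      _ = A * nH * nG := by ring
      _ = lH * Nat.card G * nG := by rw [heqs]
      _ = lH * nG * Nat.card G := by ring
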